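/- (Injectivity of the noiseless map / correctness of the recovery algorithm.) Let X, X' ∈ ℂ^{M×T} both satisfy the training condition x_m(MQ+n) = δ_{n−m} for 1 ≤ n, m ≤ M. Assume: (i) C_R(X) and C_R(X') are invertible; (ii) J(X) is invertible; (iii) A^1(t) ≠ 0 for every t with M(Q+1) < t ≤ T, where A^1 is the first row of A; and (iv) the row space of R(X) equals the row space of R(X'). Then X = X'. Consequently, under these conditions the transmitted signal X is uniquely determined by the subspace F_A(X) = row space of R(X). -/

import Mathlib

open Matrix

noncomputable section

/-- The column index `(m-1)Q + q` (0-indexed: `m*Q + q`) among the first `MQ`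
columns, as an index into `Fin T`. -/
def emb (M Q T : ℕ) (h : M * Q ≤ T) (p : Fin M × Fin Q) : Fin T :=
  ⟨p.1.1 * Q + p.2.1, by
    have hm := p.1.2
    have hq := p.2.2
    have h1 : p.1.1 * Q + p.2.1 < (p.1.1 + 1) * Q := by
      have : (p.1.1 + 1) * Q = p.1.1 * Q + Q := by ring
      omega
    have h2 : (p.1.1 + 1) * Q ≤ M * Q := Nat.mul_le_mul_right Q hm
    omega⟩

/-- The column index `MQ + j` (0-indexed) as an index into `Fin T`, assuming
`M(Q+1) ≤ T`. -/
def tcol (M Q T : ℕ) (h : M * (Q + 1) ≤ T) (j : Fin M) : Fin T :=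
  ⟨M * Q + j.1, by
    have hj := j.2
    have : M * (Q + 1) = M * Q + M := by ring
    omega⟩

/-- `R(X) ∈ ℂ^{MQ×T}`: the block matrix whose `m`-th block of `Q` rows is
`A·diag(x_m)`; rows are indexed by pairs `(m, q)`. -/
def Rmat (M Q T : ℕ) (A : Matrix (Fin Q) (Fin T) ℂ) (X : Matrix (Fin M) (Fin T) ℂ) :
    Matrix (Fin M × Fin Q) (Fin T) ℂ :=
  Matrix.of fun p t => A p.2 t * X p.1 t

/-- `C_R(X) ∈ ℂ^{MQ×MQ}`: the submatrix of the first `MQ` columns of `R(X)`. -/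
def CR (M Q T : ℕ) (h : M * Q ≤ T) (A : Matrix (Fin Q) (Fin T) ℂ)
    (X : Matrix (Fin M) (Fin T) ℂ) : Matrix (Fin M × Fin Q) (Fin M × Fin Q) ℂ :=
  Matrix.of fun p p' => Rmat M Q T A X p (emb M Q T h p')

/-- `B = C_R⁻¹·R ∈ ℂ^{MQ×T}`, the reduced row echelon form representative. -/
def Bmat (M Q T : ℕ) (h : M * Q ≤ T) (A : Matrix (Fin Q) (Fin T) ℂ)
    (X : Matrix (Fin M) (Fin T) ℂ) : Matrix (Fin M × Fin Q) (Fin T) ℂ :=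
  (CR M Q T h A X)⁻¹ * Rmat M Q T A X

/-- `J(X) ∈ ℂ^{MQ×MQ}`: the block matrix whose `j`-th block of `Q` rows is
`A[:,1:MQ]·diag(B(MQ+j))`. -/
def Jmat (M Q T : ℕ) (h : M * (Q + 1) ≤ T) (A : Matrix (Fin Q) (Fin T) ℂ)
    (X : Matrix (Fin M) (Fin T) ℂ) : Matrix (Fin M × Fin Q) (Fin M × Fin Q) ℂ :=
  Matrix.of fun p p' =>
    A p.2 (emb M Q T (le_trans (Nat.mul_le_mul_left M (Nat.le_succ Q)) h) p')
      * Bmat M Q T (le_trans (Nat.mul_le_mul_left M (Nat.le_succ Q)) h) A X p'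
          (tcol M Q T h p.1)

lemma rowspan_mul_le {n : ℕ} {ι : Type*} [Fintype ι] [DecidableEq ι]
    (N : Matrix ι ι ℂ) (R : Matrix ι (Fin n) ℂ) :
    Submodule.span ℂ (Set.range fun p => (N * R) p)
      ≤ Submodule.span ℂ (Set.range fun p => R p) := by
  rw [Submodule.span_le]
  rintro _ ⟨p, rfl⟩
  rw [SetLike.mem_coe]
  show (N * R) p ∈ _
  have hrow : (N * R) p = ∑ k, N p k • R k := by
    funext t
    simp [Matrix.mul_apply, Finset.sum_apply]
  rw [hrow]
  exact Submodule.sum_mem _ fun k _ =>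
    Submodule.smul_mem _ _ (Submodule.subset_span ⟨k, rfl⟩)

lemma rowspan_mul_eq {n : ℕ} {ι : Type*} [Fintype ι] [DecidableEq ι]
    (N : Matrix ι ι ℂ) (R : Matrix ι (Fin n) ℂ) (hN : IsUnit N.det) :
    Submodule.span ℂ (Set.range fun p => (N * R) p)
      = Submodule.span ℂ (Set.range fun p => R p) := by
  refine le_antisymm (rowspan_mul_le N R) ?_
  have hR : R = N⁻¹ * (N * R) := by
    rw [← Matrix.mul_assoc, Matrix.nonsing_inv_mul N hN, Matrix.one_mul]
  calc Submodule.span ℂ (Set.range fun p => R p)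
      = Submodule.span ℂ (Set.range fun p => (N⁻¹ * (N * R)) p) := by rw [← hR]
    _ ≤ _ := rowspan_mul_le _ _

/-- injectivity of the noiseless map / correctness of the recovery
algorithm: if `X, X'` both satisfy the training condition, `C_R(X)` and `C_R(X')` are
invertible, `J(X)` is invertible, `A^1(t) ≠ 0` for every `t` with `M(Q+1) < t ≤ T`
(0-indexed: `M(Q+1) ≤ t`), and the row spaces of `R(X)` and `R(X')` coincide, then
`X = X'`: the transmitted signal is uniquely determined by the subspace
`F_A(X) = row space of R(X)`. -/
theorem stmt15 (M Q T : ℕ) (hM : 0 < M) (hQ : 0 < Q) (hT : 0 < T) (h : M * (Q + 1) ≤ T)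
    (A : Matrix (Fin Q) (Fin T) ℂ) (X X' : Matrix (Fin M) (Fin T) ℂ)
    (htrain : ∀ n m : Fin M, X m (tcol M Q T h n) = if n = m then 1 else 0)
    (htrain' : ∀ n m : Fin M, X' m (tcol M Q T h n) = if n = m then 1 else 0)
    (hC : IsUnit (CR M Q T (le_trans (Nat.mul_le_mul_left M (Nat.le_succ Q)) h) A X))
    (hC' : IsUnit (CR M Q T (le_trans (Nat.mul_le_mul_left M (Nat.le_succ Q)) h) A X'))
    (hJ : IsUnit (Jmat M Q T h A X))
    (hA1 : ∀ t : Fin T, M * (Q + 1) ≤ t.1 → A ⟨0, hQ⟩ t ≠ 0)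
    (hspan : Submodule.span ℂ (Set.range fun p : Fin M × Fin Q => Rmat M Q T A X p)
      = Submodule.span ℂ (Set.range fun p : Fin M × Fin Q => Rmat M Q T A X' p)) :
    X = X' := by
  set h0 : M * Q ≤ T := le_trans (Nat.mul_le_mul_left M (Nat.le_succ Q)) h with hh0
  have hCd : IsUnit (CR M Q T h0 A X).det := (Matrix.isUnit_iff_isUnit_det _).mp hC
  have hCd' : IsUnit (CR M Q T h0 A X').det := (Matrix.isUnit_iff_isUnit_det _).mp hC'
  -- B has identity in the first MQ columns
  have hBid : ∀ (Y : Matrix (Fin M) (Fin T) ℂ), IsUnit (CR M Q T h0 A Y).det →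
      ∀ p p'' : Fin M × Fin Q,
      Bmat M Q T h0 A Y p (emb M Q T h0 p'') = if p = p'' then 1 else 0 := by
    intro Y hY p p''
    have : Bmat M Q T h0 A Y p (emb M Q T h0 p'')
        = ((CR M Q T h0 A Y)⁻¹ * CR M Q T h0 A Y) p p'' := by
      simp only [Bmat, Matrix.mul_apply, CR]
      rfl
    rw [this, Matrix.nonsing_inv_mul _ hY, Matrix.one_apply]
  -- equal row spans of B
  have hBspan : Submodule.span ℂ (Set.range fun p : Fin M × Fin Q => Bmat M Q T h0 A X p)
      = Submodule.span ℂ (Set.range fun p : Fin M × Fin Q => Bmat M Q T h0 A X' p) := by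
    have e1 := rowspan_mul_eq (CR M Q T h0 A X)⁻¹ (Rmat M Q T A X)
      (by rw [Matrix.det_nonsing_inv]; exact hCd.ringInverse)
    have e2 := rowspan_mul_eq (CR M Q T h0 A X')⁻¹ (Rmat M Q T A X')
      (by rw [Matrix.det_nonsing_inv]; exact hCd'.ringInverse)
    unfold Bmat
    rw [e1, e2, hspan]
  -- B(X) = B(X')
  have hBB : Bmat M Q T h0 A X = Bmat M Q T h0 A X' := by
    funext p t
    have hmem : Bmat M Q T h0 A X' p
        ∈ Submodule.span ℂ (Set.range fun p : Fin M × Fin Q => Bmat M Q T h0 A X p) := by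
      rw [hBspan]
      exact Submodule.subset_span ⟨p, rfl⟩
    rw [Submodule.mem_span_range_iff_exists_fun] at hmem
    obtain ⟨c, hc⟩ := hmem
    have hcval : ∀ p'' : Fin M × Fin Q, c p'' = if p = p'' then 1 else 0 := by
      intro p''
      have := congrFun hc (emb M Q T h0 p'')
      simp only [Finset.sum_apply, Pi.smul_apply, smul_eq_mul] at this
      rw [hBid X' hCd' p p''] at this
      calc c p'' = ∑ i, c i * Bmat M Q T h0 A X i (emb M Q T h0 p'') := by
            rw [Finset.sum_eq_single p'']
            · rw [hBid X hCd p'' p'', if_pos rfl, mul_one]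
            · intro i _ hi
              rw [hBid X hCd i p'', if_neg hi, mul_zero]
            · intro hmem; exact absurd (Finset.mem_univ _) hmem
        _ = if p = p'' then 1 else 0 := this
    have := congrFun hc t
    simp only [Finset.sum_apply, Pi.smul_apply, smul_eq_mul] at this
    rw [← this, Finset.sum_congr rfl fun i _ => by rw [hcval i]]
    rw [Finset.sum_eq_single p]
    · rw [if_pos rfl, one_mul]
    · intro i _ hi
      rw [if_neg (Ne.symm hi), zero_mul]
    · intro hmem; exact absurd (Finset.mem_univ _) hmem
  -- C * B = R for both
  have hCB : ∀ (Y : Matrix (Fin M) (Fin T) ℂ), IsUnit (CR M Q T h0 A Y).det →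
      CR M Q T h0 A Y * Bmat M Q T h0 A Y = Rmat M Q T A Y := by
    intro Y hY
    unfold Bmat
    rw [← Matrix.mul_assoc, Matrix.mul_nonsing_inv _ hY, Matrix.one_mul]
  -- J(X') = J(X) since J depends only on B
  have hJJ : Jmat M Q T h A X' = Jmat M Q T h A X := by
    funext p p'
    simp only [Jmat, Matrix.of_apply]
    congr 1
    exact congrFun (congrFun hBB.symm p') (tcol M Q T h p.1)
  -- the J * V computation
  have hJV : ∀ (Y : Matrix (Fin M) (Fin T) ℂ),
      (∀ n m : Fin M, Y m (tcol M Q T h n) = if n = m then 1 else 0) →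
      IsUnit (CR M Q T h0 A Y).det →
      Jmat M Q T h A Y * (Matrix.of fun (p : Fin M × Fin Q) (m : Fin M) => Y m (emb M Q T h0 p))
        = Matrix.of fun (p : Fin M × Fin Q) (m : Fin M) =>
            if p.1 = m then A p.2 (tcol M Q T h p.1) else 0 := by
    intro Y htr hY
    funext p m
    have hcb := congrFun (congrFun (hCB Y hY) (m, p.2)) (tcol M Q T h p.1)
    simp only [Matrix.mul_apply, CR, Rmat, Matrix.of_apply, Jmat] at hcb ⊢
    calc (∑ j, A p.2 (emb M Q T h0 j) * Bmat M Q T h0 A Y j (tcol M Q T h p.1)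
            * Y m (emb M Q T h0 j))
        = ∑ j, A p.2 (emb M Q T h0 j) * Y m (emb M Q T h0 j)
            * Bmat M Q T h0 A Y j (tcol M Q T h p.1) := by
          apply Finset.sum_congr rfl; intro j _; ring
      _ = A p.2 (tcol M Q T h p.1) * Y m (tcol M Q T h p.1) := hcb
      _ = if p.1 = m then A p.2 (tcol M Q T h p.1) else 0 := by
          rw [htr p.1 m]
          by_cases hm : p.1 = m <;> simp [hm]
  -- X and X' agree on the first MQ columns
  have hVV : ∀ (m : Fin M) (p : Fin M × Fin Q),
      X m (emb M Q T h0 p) = X' m (emb M Q T h0 p) := by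
    have h1 := hJV X htrain hCd
    have h2 := hJV X' htrain' hCd'
    rw [hJJ] at h2
    have hJd : IsUnit (Jmat M Q T h A X).det := (Matrix.isUnit_iff_isUnit_det _).mp hJ
    have := h1.trans h2.symm
    have hcancel := congrArg (fun Z => (Jmat M Q T h A X)⁻¹ * Z) this
    simp only [← Matrix.mul_assoc, Matrix.nonsing_inv_mul _ hJd, Matrix.one_mul] at hcancel
    intro m p
    exact congrFun (congrFun hcancel p) m
  -- hence C_R(X) = C_R(X'), so R(X) = R(X')
  have hCC : CR M Q T h0 A X = CR M Q T h0 A X' := by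
    funext p p'
    simp only [CR, Rmat, Matrix.of_apply]
    rw [hVV p.1 p']
  have hRR : Rmat M Q T A X = Rmat M Q T A X' := by
    rw [← hCB X hCd, ← hCB X' hCd', hCC, hBB]
  -- conclude entrywise
  funext m t
  rcases lt_or_ge t.1 (M * Q) with ht | ht
  · have hmlt : t.1 / Q < M := Nat.div_lt_of_lt_mul (by rw [Nat.mul_comm] at ht; exact ht)
    have hqlt : t.1 % Q < Q := Nat.mod_lt _ hQ
    have hte : t = emb M Q T h0 (⟨t.1 / Q, hmlt⟩, ⟨t.1 % Q, hqlt⟩) := by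
      apply Fin.ext
      simp only [emb]
      rw [Nat.mul_comm]
      exact (Nat.div_add_mod t.1 Q).symm
    rw [hte]
    exact hVV m _
  · rcases lt_or_ge t.1 (M * (Q + 1)) with ht2 | ht2
    · have hjlt : t.1 - M * Q < M := by
        have : M * (Q + 1) = M * Q + M := by ring
        omega
      have hte : t = tcol M Q T h ⟨t.1 - M * Q, hjlt⟩ := by
        apply Fin.ext
        simp only [tcol]
        omega
      rw [hte, htrain, htrain']
    · have := congrFun (congrFun hRR (m, ⟨0, hQ⟩)) t
      simp only [Rmat, Matrix.of_apply] at this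
      exact mul_left_cancel₀ (hA1 t ht2) this
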